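/- arXiv:1810.02872 — 3 statements merged into one kernel-verified Lean document; each statement's English description precedes it below -/
import Mathlib

section
/- Let 𝒢 be a groupoid with 𝒢₀ finite acting partially on a coalgebra C via subcoalgebras {C_g}, coalgebra isomorphisms {θ_g} and projections {P_g}. Then: (i) θ_{r(g)}∘θ_g = θ_g and θ_{r(g)}∘P_g = P_g for all g ∈ 𝒢; (ii) θ_{g⁻¹} = (θ_g)⁻¹ for all g ∈ 𝒢; (iii) P_{g⁻¹}∘θ_h = θ_h∘P_{(gh)⁻¹} as maps on C_{h⁻¹}, whenever gh is defined. -/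
open TensorProduct Coalgebra

/-- A groupoid in the sense of partial action theory: a set with a partially defined
product (`defined g h` expresses that `g h` exists; `mul g h` is the product, with junk
value otherwise) and inverses, with `d(g) = g⁻¹g`, `r(g) = gg⁻¹`. -/
structure Gpd (G : Type*) where
  defined : G → G → Prop
  mul : G → G → G
  inv : G → G
  defined_mul_inv : ∀ g, defined g (inv g)
  defined_inv_mul : ∀ g, defined (inv g) g
  /-- `∃ gh` iff `d(g) = r(h)` -/
  defined_iff : ∀ g h, defined g h ↔ mul (inv g) g = mul h (inv h)
  mul_assoc' : ∀ g h l, defined g h → defined h l → mul (mul g h) l = mul g (mul h l)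
  defined_mul_left : ∀ g h l, defined g h → defined h l → defined (mul g h) l
  defined_mul_right : ∀ g h l, defined g h → defined h l → defined g (mul h l)
  /-- `g d(g) = g` -/
  mul_d : ∀ g, mul g (mul (inv g) g) = g
  /-- `r(g) g = g` -/
  r_mul : ∀ g, mul (mul g (inv g)) g = g
  inv_inv : ∀ g, inv (inv g) = g

namespace Gpd

variable {G : Type*} (S : Gpd G)

/-- `d(g) = g⁻¹ g`. -/
def d (g : G) : G := S.mul (S.inv g) g

/-- `r(g) = g g⁻¹`. -/
def r (g : G) : G := S.mul g (S.inv g)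

/-- `e` is an identity element of the groupoid. -/
def IsIdent (e : G) : Prop := ∃ g : G, e = S.d g

end Gpd

noncomputable section

variable (k : Type*) [Field k]
variable {G : Type*}
variable (C : Type*) [AddCommGroup C] [Module k C] [Coalgebra k C]

/-- A structure of left partial `k𝒢`-module coalgebra on `C`, described by the family of
linear maps `α_g(c) = δ_g · c` (`E` is the finite set of identity elements of `𝒢`):
`Σ_{e ∈ 𝒢₀} α_e = id` (PMC1); `Δ(δ_g · c) = (δ_g · c₁) ⊗ (δ_g · c₂)` (PMC2); and
`δ_g·(δ_h·c) = (δ_{gh}·c₁) ε(δ_h·c₂)` when `gh` is defined, and `0` otherwise (PMC3). -/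
structure IsGpdPartialModuleCoalgebra (S : Gpd G) (E : Finset G)
    (α : G → (C →ₗ[k] C)) : Prop where
  ident_sum : ∑ e ∈ E, α e = LinearMap.id
  comul_compat : ∀ (g : G) (c : C),
      comul (R := k) (α g c) = TensorProduct.map (α g) (α g) (comul (R := k) c)
  comp_defined : ∀ (g h : G) (c : C), S.defined g h →
      α g (α h c)
        = (TensorProduct.rid k C)
            ((TensorProduct.map (α (S.mul g h)) (counit (R := k) ∘ₗ α h)) (comul (R := k) c))
  comp_undefined : ∀ (g h : G) (c : C), ¬ S.defined g h → α g (α h c) = 0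

/-- A *symmetric* left partial `k𝒢`-module coalgebra structure: additionally
`δ_g·(δ_h·c) = ε(δ_h·c₁) (δ_{gh}·c₂)` when `gh` is defined. -/
structure IsGpdSymmetricPartialModuleCoalgebra (S : Gpd G) (E : Finset G)
    (α : G → (C →ₗ[k] C))
    extends IsGpdPartialModuleCoalgebra k C S E α : Prop where
  comp_defined' : ∀ (g h : G) (c : C), S.defined g h →
      α g (α h c)
        = (TensorProduct.lid k C)
            ((TensorProduct.map (counit (R := k) ∘ₗ α h) (α (S.mul g h))) (comul (R := k) c))

end

noncomputable section

open scoped Classical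

variable (k : Type*) [Field k]
variable {G : Type*}
variable (C : Type*) [AddCommGroup C] [Module k C] [Coalgebra k C]

/-- A partial action of a groupoid `𝒢` on a coalgebra `C`: a family of subcoalgebras
`C_g`, coalgebra isomorphisms `θ_g : C_{g⁻¹} → C_g` (encoded as global linear maps, whose
behaviour only matters on `C_{g⁻¹}`) and linear projections `P_g : C → C` onto `C_g`,
subject to the axioms of Definition "partial groupoid action on a coalgebra". -/
structure GpdCoaction (S : Gpd G) where
  Csub : G → Submodule k C
  θ : G → (C →ₗ[k] C)
  P : G → (C →ₗ[k] C)
  /-- each `C_g` is a subcoalgebra -/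
  Csub_subcoalgebra : ∀ g : G, ∀ c ∈ Csub g,
      comul (R := k) c
        ∈ LinearMap.range (TensorProduct.map (Csub g).subtype (Csub g).subtype)
  P_proj : ∀ g : G, (P g) ∘ₗ (P g) = P g
  P_range : ∀ g : G, LinearMap.range (P g) = Csub g
  /-- `(P_g ⊗ P_g)Δ = Δ P_g` -/
  P_comul : ∀ (g : G) (c : C),
      TensorProduct.map (P g) (P g) (comul (R := k) c) = comul (R := k) (P g c)
  /-- `P_g(c) = P_{r(g)}(c₁) ε(P_g(c₂))` -/
  P_quasi : ∀ (g : G) (c : C),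
      P g c = (TensorProduct.rid k C)
          ((TensorProduct.map (P (S.r g)) (counit (R := k) ∘ₗ P g)) (comul (R := k) c))
  /-- `P_g(c) = P_{r(g)}(c₂) ε(P_g(c₁))` -/
  P_quasi' : ∀ (g : G) (c : C),
      P g c = (TensorProduct.lid k C)
          ((TensorProduct.map (counit (R := k) ∘ₗ P g) (P (S.r g))) (comul (R := k) c))
  /-- `θ_e = id_{C_e}` for identities `e` -/
  θ_ident : ∀ e : G, S.IsIdent e → ∀ c ∈ Csub e, θ e c = c
  /-- `θ_g` maps `C_{g⁻¹}` into `C_g` -/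
  θ_maps : ∀ g : G, ∀ c ∈ Csub (S.inv g), θ g c ∈ Csub g
  /-- `θ_g` is injective on `C_{g⁻¹}` -/
  θ_inj : ∀ g : G, ∀ c ∈ Csub (S.inv g), ∀ c' ∈ Csub (S.inv g), θ g c = θ g c' → c = c'
  /-- `θ_g : C_{g⁻¹} → C_g` is surjective -/
  θ_surj : ∀ g : G, ∀ c ∈ Csub g, ∃ c' ∈ Csub (S.inv g), θ g c' = c
  /-- `θ_g` is comultiplicative on `C_{g⁻¹}` -/
  θ_comul : ∀ g : G, ∀ c ∈ Csub (S.inv g),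
      comul (R := k) (θ g c) = TensorProduct.map (θ g) (θ g) (comul (R := k) c)
  /-- `θ_g` is counital on `C_{g⁻¹}` -/
  θ_counit : ∀ g : G, ∀ c ∈ Csub (S.inv g), counit (R := k) (θ g c) = counit (R := k) c
  /-- the projections commute -/
  P_comm : ∀ g h : G, (P g) ∘ₗ (P h) = (P h) ∘ₗ (P g)
  /-- `θ_{h⁻¹} ∘ P_h ∘ P_{g⁻¹} = P_{(gh)⁻¹} ∘ θ_{h⁻¹} ∘ P_h` when `gh` is defined -/
  compat₂ : ∀ g h : G, S.defined g h →
      (θ (S.inv h)) ∘ₗ (P h) ∘ₗ (P (S.inv g))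
        = (P (S.inv (S.mul g h))) ∘ₗ (θ (S.inv h)) ∘ₗ (P h)
  /-- `θ_g ∘ θ_h ∘ P_{(gh)⁻¹} ∘ P_{h⁻¹} = θ_{gh} ∘ P_{(gh)⁻¹} ∘ P_{h⁻¹}` when `gh` is defined -/
  compat₃ : ∀ g h : G, S.defined g h →
      (θ g) ∘ₗ (θ h) ∘ₗ (P (S.inv (S.mul g h))) ∘ₗ (P (S.inv h))
        = (θ (S.mul g h)) ∘ₗ (P (S.inv (S.mul g h))) ∘ₗ (P (S.inv h))

end

section Aux

namespace Gpd

variable {G : Type*} (S : Gpd G)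

/-- `(d g)⁻¹ = d g`. -/
lemma inv_dd (g : G) : S.inv (S.mul (S.inv g) g) = S.mul (S.inv g) g := by
  set e := S.mul (S.inv g) g with hedef
  have h1 : S.defined g e :=
    S.defined_mul_right g (S.inv g) g (S.defined_mul_inv g) (S.defined_inv_mul g)
  have he : S.mul e (S.inv e) = e := ((S.defined_iff g e).mp h1).symm
  have h4 : S.defined e e := by
    have := S.defined_mul_left e (S.inv e) e (S.defined_mul_inv e) (S.defined_inv_mul e)
    rwa [he] at this
  have h5 : S.mul (S.inv e) e = e := by
    have := (S.defined_iff e e).mp h4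
    rwa [he] at this
  have h6 : S.mul (S.inv e) e = S.inv e := by
    have := S.mul_d (S.inv e)
    rwa [S.inv_inv, he] at this
  rw [← h6, h5]

lemma r_inv_eq (g : G) : S.r (S.inv g) = S.mul (S.inv g) g := by
  show S.mul (S.inv g) (S.inv (S.inv g)) = S.mul (S.inv g) g
  rw [S.inv_inv]

lemma isIdent_dd (g : G) : S.IsIdent (S.mul (S.inv g) g) := ⟨g, rfl⟩

lemma isIdent_r (g : G) : S.IsIdent (S.r g) :=
  ⟨S.inv g, show S.mul g (S.inv g) = S.mul (S.inv (S.inv g)) (S.inv g) from by rw [S.inv_inv]⟩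

end Gpd

namespace GpdCoaction

variable {k : Type*} [Field k] {G : Type*} {C : Type*}
  [AddCommGroup C] [Module k C] [Coalgebra k C] {S : Gpd G} (A : GpdCoaction k C S)

lemma P_fix {g : G} {c : C} (hc : c ∈ A.Csub g) : A.P g c = c := by
  rw [← A.P_range] at hc
  obtain ⟨y, rfl⟩ := hc
  exact LinearMap.congr_fun (A.P_proj g) y

lemma P_mem_r (g : G) (c : C) : A.P g c ∈ A.Csub (S.r g) := by
  rw [A.P_quasi g c]
  generalize comul (R := k) c = t
  induction t using TensorProduct.induction_on with
  | zero => simpa using (A.Csub (S.r g)).zero_mem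
  | tmul a b =>
      simp only [TensorProduct.map_tmul, TensorProduct.rid_tmul, LinearMap.comp_apply]
      exact Submodule.smul_mem _ _ (by rw [← A.P_range]; exact ⟨a, rfl⟩)
  | add x y hx hy =>
      simp only [map_add]
      exact add_mem hx hy

lemma mem_r {g : G} {c : C} (hc : c ∈ A.Csub g) : c ∈ A.Csub (S.r g) :=
  A.P_fix hc ▸ A.P_mem_r g c

lemma θ_inv_θ (g : G) {c : C} (hc : c ∈ A.Csub (S.inv g)) :
    A.θ (S.inv g) (A.θ g c) = c := by
  have hcd : c ∈ A.Csub (S.mul (S.inv g) g) := by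
    have h0 := A.mem_r hc
    rwa [S.r_inv_eq g] at h0
  have key := LinearMap.congr_fun (A.compat₃ (S.inv g) g (S.defined_inv_mul g)) c
  simp only [LinearMap.comp_apply] at key
  rw [S.inv_dd g, A.P_fix hc, A.P_fix hcd,
    A.θ_ident (S.mul (S.inv g) g) (S.isIdent_dd g) c hcd] at key
  exact key

lemma θ_θ_inv (g : G) {c : C} (hc : c ∈ A.Csub g) :
    A.θ g (A.θ (S.inv g) c) = c := by
  have h := A.θ_inv_θ (S.inv g) (c := c)
  rw [S.inv_inv] at h
  exact h hc

lemma P_θ_swap (g h : G) (hgh : S.defined g h) {c : C} (hc : c ∈ A.Csub (S.inv h)) :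
    A.P (S.inv g) (A.θ h c) = A.θ h (A.P (S.inv (S.mul g h)) c) := by
  have hθc : A.θ h c ∈ A.Csub h := A.θ_maps h c hc
  have key := LinearMap.congr_fun (A.compat₂ g h hgh) (A.θ h c)
  simp only [LinearMap.comp_apply] at key
  rw [A.P_fix hθc, A.θ_inv_θ h hc] at key
  have hx : A.P h (A.P (S.inv g) (A.θ h c)) ∈ A.Csub h := by
    rw [← A.P_range]; exact ⟨_, rfl⟩
  have key2 := congrArg (A.θ h) key
  rw [A.θ_θ_inv h hx] at key2
  have hcomm := LinearMap.congr_fun (A.P_comm h (S.inv g)) (A.θ h c)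
  simp only [LinearMap.comp_apply] at hcomm
  rw [hcomm, A.P_fix hθc] at key2
  exact key2

end GpdCoaction

end Aux

/-- For a partial action of a groupoid `𝒢` (with `𝒢₀` finite) on a
coalgebra `C`: (i) `θ_{r(g)} ∘ θ_g = θ_g` on `C_{g⁻¹}` and `θ_{r(g)} ∘ P_g = P_g`;
(ii) `θ_{g⁻¹} = (θ_g)⁻¹`; (iii) `P_{g⁻¹} ∘ θ_h = θ_h ∘ P_{(gh)⁻¹}` on `C_{h⁻¹}`
whenever `gh` is defined. -/
theorem gpd_coaction_properties
    (k : Type*) [Field k] {G : Type*}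
    (C : Type*) [AddCommGroup C] [Module k C] [Coalgebra k C]
    (S : Gpd G) (E : Finset G) (hE : ∀ e : G, e ∈ E ↔ S.IsIdent e)
    (A : GpdCoaction k C S) :
    (∀ g : G, (∀ c ∈ A.Csub (S.inv g), A.θ (S.r g) (A.θ g c) = A.θ g c) ∧
       (∀ c : C, A.θ (S.r g) (A.P g c) = A.P g c)) ∧
    (∀ g : G, (∀ c ∈ A.Csub (S.inv g), A.θ (S.inv g) (A.θ g c) = c) ∧
       (∀ c ∈ A.Csub g, A.θ g (A.θ (S.inv g) c) = c)) ∧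
    (∀ g h : G, S.defined g h →
       ∀ c ∈ A.Csub (S.inv h),
         A.P (S.inv g) (A.θ h c) = A.θ h (A.P (S.inv (S.mul g h)) c)) := by
  refine ⟨fun g => ⟨fun c hc => ?_, fun c => ?_⟩,
    fun g => ⟨fun c hc => A.θ_inv_θ g hc, fun c hc => A.θ_θ_inv g hc⟩,
    fun g h hgh c hc => A.P_θ_swap g h hgh hc⟩
  · exact A.θ_ident (S.r g) (S.isIdent_r g) _ (A.mem_r (A.θ_maps g c hc))
  · exact A.θ_ident (S.r g) (S.isIdent_r g) _ (A.P_mem_r g c)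
end

section
/- Let H be a weak Hopf algebra and C a left partial H-module coalgebra via ·. Then the dual convolution algebra C* is a right partial H-module algebra via (α↼h)(c) := α(h·c) for α ∈ C*, h ∈ H, c ∈ C. Moreover, if C is a symmetric left partial H-module coalgebra, then C* is a symmetric right partial H-module algebra. -/
open TensorProduct Coalgebra

noncomputable section

variable (k : Type*) [Field k]

section WeakHopfDefs

variable (H : Type*) [Ring H] [Algebra k H] [Coalgebra k H]

/-- The target map `ε_t(h) = ε(1₁ h) 1₂` of a weak bialgebra. -/
def wεt (h : H) : H :=
  (TensorProduct.lid k H)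
    ((TensorProduct.map (counit (R := k) ∘ₗ LinearMap.mulRight k h) (LinearMap.id))
      (comul (R := k) (1 : H)))

/-- The source map `ε_s(h) = 1₁ ε(h 1₂)` of a weak bialgebra. -/
def wεs (h : H) : H :=
  (TensorProduct.rid k H)
    ((TensorProduct.map (LinearMap.id) (counit (R := k) ∘ₗ LinearMap.mulLeft k h))
      (comul (R := k) (1 : H)))

/-- A weak Hopf algebra structure on an algebra `H` which is also a coalgebra:
the weak bialgebra axioms together with an antipode `S`. -/
structure WeakHopf : Type _ where
  /-- Δ is multiplicative -/
  comul_mul : ∀ h g : H, comul (R := k) (h * g) = comul (R := k) h * comul (R := k) g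
  /-- ε(hgl) = Σ ε(h g₁) ε(g₂ l) -/
  counit_weak_mul : ∀ h g l : H, counit (R := k) (h * g * l)
      = LinearMap.mul' k k
          ((TensorProduct.map (counit (R := k) ∘ₗ LinearMap.mulLeft k h)
              (counit (R := k) ∘ₗ LinearMap.mulRight k l)) (comul (R := k) g))
  /-- ε(hgl) = Σ ε(h g₂) ε(g₁ l) -/
  counit_weak_mul' : ∀ h g l : H, counit (R := k) (h * g * l)
      = LinearMap.mul' k k
          ((TensorProduct.map (counit (R := k) ∘ₗ LinearMap.mulLeft k h)
              (counit (R := k) ∘ₗ LinearMap.mulRight k l))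
            ((TensorProduct.comm k H H) (comul (R := k) g)))
  /-- (1 ⊗ Δ(1))(Δ(1) ⊗ 1) = Δ²(1) -/
  comul_one_left :
      ((1 : H) ⊗ₜ[k] comul (R := k) (1 : H))
          * ((TensorProduct.assoc k H H H) (comul (R := k) (1 : H) ⊗ₜ[k] (1 : H)))
        = (LinearMap.lTensor H (comul (R := k))) (comul (R := k) (1 : H))
  /-- (Δ(1) ⊗ 1)(1 ⊗ Δ(1)) = Δ²(1) -/
  comul_one_right :
      ((TensorProduct.assoc k H H H) (comul (R := k) (1 : H) ⊗ₜ[k] (1 : H)))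
          * ((1 : H) ⊗ₜ[k] comul (R := k) (1 : H))
        = (LinearMap.lTensor H (comul (R := k))) (comul (R := k) (1 : H))
  /-- the antipode -/
  S : H →ₗ[k] H
  /-- Σ h₁ S(h₂) = ε_t(h) -/
  antipode_t : ∀ h : H,
      LinearMap.mul' k H ((LinearMap.lTensor H S) (comul (R := k) h)) = wεt k H h
  /-- Σ S(h₁) h₂ = ε_s(h) -/
  antipode_s : ∀ h : H,
      LinearMap.mul' k H ((LinearMap.rTensor H S) (comul (R := k) h)) = wεs k H h
  /-- Σ S(h₁) h₂ S(h₃) = S(h) -/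
  antipode_mid : ∀ h : H,
      LinearMap.mul' k H
        ((TensorProduct.map S (LinearMap.mul' k H ∘ₗ LinearMap.lTensor H S))
          ((LinearMap.lTensor H (comul (R := k))) (comul (R := k) h))) = S h

end WeakHopfDefs

section Actions

variable (H : Type*) [Ring H] [Algebra k H] [Coalgebra k H]
variable (C : Type*) [AddCommGroup C] [Module k C] [Coalgebra k C]

/-- The Sweedler sum `Σ (h g₁ · c₁) ε(g₂ · c₂)` appearing in (PMC3). -/
def pmc3RHS (act : H →ₗ[k] C →ₗ[k] C) (h g : H) (c : C) : C :=
  (TensorProduct.rid k C)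
    ((TensorProduct.map
        ((TensorProduct.lift act) ∘ₗ (LinearMap.rTensor C (LinearMap.mulLeft k h)))
        (counit (R := k) ∘ₗ (TensorProduct.lift act)))
      ((TensorProduct.tensorTensorTensorComm k H H C C)
        (comul (R := k) g ⊗ₜ[k] comul (R := k) c)))

/-- The Sweedler sum `Σ ε(g₁ · c₁) (h g₂ · c₂)` appearing in the symmetry condition. -/
def pmc3symRHS (act : H →ₗ[k] C →ₗ[k] C) (h g : H) (c : C) : C :=
  (TensorProduct.lid k C)
    ((TensorProduct.map
        (counit (R := k) ∘ₗ (TensorProduct.lift act))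
        ((TensorProduct.lift act) ∘ₗ (LinearMap.rTensor C (LinearMap.mulLeft k h))))
      ((TensorProduct.tensorTensorTensorComm k H H C C)
        (comul (R := k) g ⊗ₜ[k] comul (R := k) c)))

/-- (MC2)/(PMC2): `Δ(h·c) = (h₁·c₁) ⊗ (h₂·c₂)`. -/
def SweedlerComulCompat (act : H →ₗ[k] C →ₗ[k] C) : Prop :=
  ∀ (h : H) (c : C),
    comul (R := k) (act h c)
      = (TensorProduct.map (TensorProduct.lift act) (TensorProduct.lift act))
          ((TensorProduct.tensorTensorTensorComm k H H C C)
            (comul (R := k) h ⊗ₜ[k] comul (R := k) c))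

/-- `C` is a left partial `H`-module coalgebra via `act` (`act h c = h · c`). -/
structure IsPartialModuleCoalgebra (act : H →ₗ[k] C →ₗ[k] C) : Prop where
  pmc1 : ∀ c : C, act 1 c = c
  pmc2 : SweedlerComulCompat k H C act
  pmc3 : ∀ (h g : H) (c : C), act h (act g c) = pmc3RHS k H C act h g c

/-- `C` is a symmetric left partial `H`-module coalgebra via `act`. -/
structure IsSymmetricPartialModuleCoalgebra (act : H →ₗ[k] C →ₗ[k] C)
    extends IsPartialModuleCoalgebra k H C act : Prop where
  pmc3sym : ∀ (h g : H) (c : C), act h (act g c) = pmc3symRHS k H C act h g c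

/-- `C` is a left `H`-module coalgebra via `act`. -/
structure IsModuleCoalgebra (act : H →ₗ[k] C →ₗ[k] C) : Prop where
  mc1 : ∀ c : C, act 1 c = c
  mc2 : SweedlerComulCompat k H C act
  mc3 : ∀ (h g : H) (c : C), act h (act g c) = act (h * g) c
  mc4 : ∀ (h : H) (c : C), counit (R := k) (act h c) = counit (R := k) (act (wεs k H h) c)

end Actions

end

noncomputable section DualDefs

variable (k : Type*) [Field k]
variable (H : Type*) [Ring H] [Algebra k H] [Coalgebra k H]
variable (C : Type*) [AddCommGroup C] [Module k C] [Coalgebra k C]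

/-- The convolution product on the dual `C* = Hom_k(C, k)`: `(αβ)(c) = α(c₁)β(c₂)`. -/
def convDual (α β : C →ₗ[k] k) : C →ₗ[k] k :=
  (LinearMap.mul' k k) ∘ₗ (TensorProduct.map α β) ∘ₗ (comul (R := k))

/-- `C*` is a right partial `H`-module algebra via `(α ↼ h)(c) = α(h · c)`, i.e.
`α ↼ h = α ∘ₗ act h`.  The three axioms are: `α ↼ 1 = α`;
`(αβ) ↼ h = (α ↼ h₁)(β ↼ h₂)`; and `(α ↼ h) ↼ g = (α ↼ h g₁)(1_{C*} ↼ g₂)`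
(written out on elements, with `1_{C*} = ε`). -/
structure IsDualRightPartialModuleAlgebra (act : H →ₗ[k] C →ₗ[k] C) : Prop where
  rpma1 : ∀ α : C →ₗ[k] k, α ∘ₗ act 1 = α
  rpma2 : ∀ (h : H) (α β : C →ₗ[k] k) (c : C),
      convDual k C α β (act h c)
        = LinearMap.mul' k k
            ((TensorProduct.map (α ∘ₗ TensorProduct.lift act) (β ∘ₗ TensorProduct.lift act))
              ((TensorProduct.tensorTensorTensorComm k H H C C)
                (comul (R := k) h ⊗ₜ[k] comul (R := k) c)))
  rpma3 : ∀ (h g : H) (α : C →ₗ[k] k) (c : C),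
      α (act h (act g c))
        = LinearMap.mul' k k
            ((TensorProduct.map
                (α ∘ₗ (TensorProduct.lift act) ∘ₗ (LinearMap.rTensor C (LinearMap.mulLeft k h)))
                (counit (R := k) ∘ₗ TensorProduct.lift act))
              ((TensorProduct.tensorTensorTensorComm k H H C C)
                (comul (R := k) g ⊗ₜ[k] comul (R := k) c)))

/-- `C*` is a *symmetric* right partial `H`-module algebra:
additionally `(α ↼ h) ↼ g = (1_{C*} ↼ g₁)(α ↼ h g₂)`. -/
structure IsDualSymmetricRightPartialModuleAlgebra (act : H →ₗ[k] C →ₗ[k] C)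
    extends IsDualRightPartialModuleAlgebra k H C act : Prop where
  rpma3sym : ∀ (h g : H) (α : C →ₗ[k] k) (c : C),
      α (act h (act g c))
        = LinearMap.mul' k k
            ((TensorProduct.map
                (counit (R := k) ∘ₗ TensorProduct.lift act)
                (α ∘ₗ (TensorProduct.lift act) ∘ₗ (LinearMap.rTensor C (LinearMap.mulLeft k h))))
              ((TensorProduct.tensorTensorTensorComm k H H C C)
                (comul (R := k) g ⊗ₜ[k] comul (R := k) c)))

end DualDefs

section Aux

variable {k : Type*} [Field k] {C X Y : Type*} [AddCommGroup C] [Module k C]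
  [AddCommGroup X] [Module k X] [AddCommGroup Y] [Module k Y]

lemma aux_rid (f : X →ₗ[k] C) (g : Y →ₗ[k] k) (α : C →ₗ[k] k) (x : X ⊗[k] Y) :
    α ((TensorProduct.rid k C) ((TensorProduct.map f g) x))
      = LinearMap.mul' k k ((TensorProduct.map (α ∘ₗ f) g) x) := by
  induction x using TensorProduct.induction_on with
  | zero => simp
  | tmul a b => simp [mul_comm]
  | add u v hu hv => simp [hu, hv]

lemma aux_lid (g : Y →ₗ[k] k) (f : X →ₗ[k] C) (α : C →ₗ[k] k) (x : Y ⊗[k] X) :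
    α ((TensorProduct.lid k C) ((TensorProduct.map g f) x))
      = LinearMap.mul' k k ((TensorProduct.map g (α ∘ₗ f)) x) := by
  induction x using TensorProduct.induction_on with
  | zero => simp
  | tmul a b => simp
  | add u v hu hv => simp [hu, hv]

end Aux

/-- If `C` is a left partial `H`-module coalgebra via `·`, then the dual
convolution algebra `C*` is a right partial `H`-module algebra via `(α ↼ h)(c) = α(h · c)`;
and if `C` is symmetric, then so is `C*`. -/
theorem dual_of_partial_module_coalgebra
    (k : Type*) [Field k] (H : Type*) [Ring H] [Algebra k H] [Coalgebra k H]
    (C : Type*) [AddCommGroup C] [Module k C] [Coalgebra k C]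
    (wh : WeakHopf k H) (act : H →ₗ[k] C →ₗ[k] C) :
    (IsPartialModuleCoalgebra k H C act → IsDualRightPartialModuleAlgebra k H C act) ∧
    (IsSymmetricPartialModuleCoalgebra k H C act →
      IsDualSymmetricRightPartialModuleAlgebra k H C act) := by
  have base : IsPartialModuleCoalgebra k H C act →
      IsDualRightPartialModuleAlgebra k H C act := by
    intro hp
    refine ⟨?_, ?_, ?_⟩
    · intro α; ext c; simp [hp.pmc1]
    · intro h α β c
      have := hp.pmc2 h c
      simp only [convDual, LinearMap.coe_comp, Function.comp_apply]
      rw [this, ← LinearMap.comp_apply (TensorProduct.map α β), ← TensorProduct.map_comp]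
    · intro h g α c
      rw [hp.pmc3 h g c, pmc3RHS, aux_rid]
  refine ⟨base, fun hs => ?_⟩
  refine ⟨base hs.toIsPartialModuleCoalgebra, ?_⟩
  intro h g α c
  rw [hs.pmc3sym h g c, pmc3symRHS, aux_lid]
end

section
/- Let H be a weak Hopf algebra, C a coalgebra, and · : H⊗C → C a linear map; define ↼ : C*⊗H → C* by (α↼h)(c) = α(h·c). If ↼ makes the dual convolution algebra C* a right partial H-module algebra, then · makes C a left partial H-module coalgebra. Moreover, if C* is a symmetric right partial H-module algebra via ↼, then C is a symmetric left partial H-module coalgebra via ·. -/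
open TensorProduct Coalgebra

section Aux

variable {k : Type*} [Field k]

lemma sep_tensor {C : Type*} [AddCommGroup C] [Module k C] (x : C ⊗[k] C)
    (hx : ∀ α β : C →ₗ[k] k, LinearMap.mul' k k (TensorProduct.map α β x) = 0) : x = 0 := by
  classical
  let b := Module.Basis.ofVectorSpace k C
  let B := b.tensorProduct b
  have key : ∀ p : _ × _, B.repr x p = 0 := by
    rintro ⟨i, j⟩
    have hmaps : (LinearMap.mul' k k ∘ₗ TensorProduct.map (b.coord i) (b.coord j))
        = (Finsupp.lapply (i, j) : _ →ₗ[k] k) ∘ₗ (B.repr : C ⊗[k] C →ₗ[k] _) := by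
      apply TensorProduct.ext'
      intro m n
      simp [B, LinearMap.mul'_apply, Module.Basis.tensorProduct_repr_tmul_apply, Module.Basis.coord_apply, mul_comm]
    have := LinearMap.congr_fun hmaps x
    simp only [LinearMap.comp_apply] at this
    rw [hx] at this
    simpa using this.symm
  have : B.repr x = 0 := Finsupp.ext key
  simpa using B.repr.injective (by simpa using this)

lemma sep_vec {C : Type*} [AddCommGroup C] [Module k C] (x : C)
    (hx : ∀ α : C →ₗ[k] k, α x = 0) : x = 0 :=
  (Module.forall_dual_apply_eq_zero_iff k x).mp hx

lemma rid_pair {A B C : Type*} [AddCommGroup A] [Module k A] [AddCommGroup B] [Module k B]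
    [AddCommGroup C] [Module k C] (f : A →ₗ[k] C) (g : B →ₗ[k] k) (α : C →ₗ[k] k)
    (y : A ⊗[k] B) :
    α ((TensorProduct.rid k C) (TensorProduct.map f g y))
      = LinearMap.mul' k k (TensorProduct.map (α ∘ₗ f) g y) := by
  have hmaps : (α ∘ₗ (TensorProduct.rid k C).toLinearMap ∘ₗ TensorProduct.map f g)
      = LinearMap.mul' k k ∘ₗ TensorProduct.map (α ∘ₗ f) g := by
    apply TensorProduct.ext'
    intro a b
    simp [LinearMap.mul'_apply, smul_eq_mul, mul_comm]
  exact LinearMap.congr_fun hmaps y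

lemma lid_pair {A B C : Type*} [AddCommGroup A] [Module k A] [AddCommGroup B] [Module k B]
    [AddCommGroup C] [Module k C] (g : A →ₗ[k] k) (f : B →ₗ[k] C) (α : C →ₗ[k] k)
    (y : A ⊗[k] B) :
    α ((TensorProduct.lid k C) (TensorProduct.map g f y))
      = LinearMap.mul' k k (TensorProduct.map g (α ∘ₗ f) y) := by
  have hmaps : (α ∘ₗ (TensorProduct.lid k C).toLinearMap ∘ₗ TensorProduct.map g f)
      = LinearMap.mul' k k ∘ₗ TensorProduct.map g (α ∘ₗ f) := by
    apply TensorProduct.ext'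
    intro a b
    simp [LinearMap.mul'_apply, smul_eq_mul]
  exact LinearMap.congr_fun hmaps y

end Aux

/-- If the map `(α ↼ h)(c) = α(h · c)` makes the dual convolution algebra
`C*` a right partial `H`-module algebra, then `·` makes `C` a left partial `H`-module
coalgebra; and if `C*` is symmetric, then so is `C`. -/
theorem partial_module_coalgebra_of_dual
    (k : Type*) [Field k] (H : Type*) [Ring H] [Algebra k H] [Coalgebra k H]
    (C : Type*) [AddCommGroup C] [Module k C] [Coalgebra k C]
    (wh : WeakHopf k H) (act : H →ₗ[k] C →ₗ[k] C) :
    (IsDualRightPartialModuleAlgebra k H C act → IsPartialModuleCoalgebra k H C act) ∧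
    (IsDualSymmetricRightPartialModuleAlgebra k H C act →
      IsSymmetricPartialModuleCoalgebra k H C act) := by
  have main : IsDualRightPartialModuleAlgebra k H C act → IsPartialModuleCoalgebra k H C act := by
    intro hD
    refine ⟨?_, ?_, ?_⟩
    · intro c
      have h1 : ∀ α : C →ₗ[k] k, α (act 1 c - c) = 0 := by
        intro α
        have := LinearMap.congr_fun (hD.rpma1 α) c
        simp only [LinearMap.comp_apply] at this
        simp [this]
      simpa [sub_eq_zero] using sep_vec _ h1
    · intro h c
      rw [← sub_eq_zero]
      apply sep_tensor
      intro α β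
      rw [map_sub, map_sub]
      have h1 : LinearMap.mul' k k (TensorProduct.map α β (comul (R := k) (act h c)))
          = convDual k C α β (act h c) := by simp [convDual]
      have h2 : LinearMap.mul' k k (TensorProduct.map α β
            ((TensorProduct.map (TensorProduct.lift act) (TensorProduct.lift act))
              ((TensorProduct.tensorTensorTensorComm k H H C C)
                (comul (R := k) h ⊗ₜ[k] comul (R := k) c))))
          = LinearMap.mul' k k
            ((TensorProduct.map (α ∘ₗ TensorProduct.lift act) (β ∘ₗ TensorProduct.lift act))
              ((TensorProduct.tensorTensorTensorComm k H H C C)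
                (comul (R := k) h ⊗ₜ[k] comul (R := k) c))) := by
        rw [TensorProduct.map_comp, LinearMap.comp_apply]
      rw [h1, h2, hD.rpma2 h α β c, sub_self]
    · intro h g c
      rw [← sub_eq_zero]
      apply sep_vec (k := k)
      intro α
      rw [map_sub, hD.rpma3 h g α c, pmc3RHS, rid_pair, sub_self]
  refine ⟨main, fun hD => ⟨main hD.toIsDualRightPartialModuleAlgebra, ?_⟩⟩
  intro h g c
  rw [← sub_eq_zero]
  apply sep_vec (k := k)
  intro α
  rw [map_sub, hD.rpma3sym h g α c, pmc3symRHS, lid_pair, sub_self]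
end
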